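/- Assume b₁, …, b₅ are pairwise distinct complex numbers. For every point (x, y₇, y₈) ∈ ℂ³ at which f₁₄, f₁₅ and f₁₆ all vanish, the 3×3 matrix 𝒰₄ whose (i,j)-entry is the partial derivative of f₍₁₃₊ᵢ₎ with respect to the j-th variable (variables ordered x, y₇, y₈), evaluated at (x, y₇, y₈), has rank 2. -/

import Mathlib

open MvPolynomial

set_option maxRecDepth 8000

/-- `k₃(x) = (x−b₁)(x−b₂)(x−b₃)` as an element of `ℂ[x,y₇,y₈]` (variables `X 0 = x`,
`X 1 = y₇`, `X 2 = y₈`). -/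
noncomputable def k3X4 (b : Fin 5 → ℂ) : MvPolynomial (Fin 3) ℂ :=
  (X 0 - C (b 0)) * (X 0 - C (b 1)) * (X 0 - C (b 2))

/-- `k₂(x) = (x−b₄)(x−b₅)` as an element of `ℂ[x,y₇,y₈]`. -/
noncomputable def k2X4 (b : Fin 5 → ℂ) : MvPolynomial (Fin 3) ℂ :=
  (X 0 - C (b 3)) * (X 0 - C (b 4))

/-- The triple `(f₁₄, f₁₅, f₁₆)` of defining polynomials of the `(3,7,8)` curve. -/
noncomputable def fX4 (b : Fin 5 → ℂ) : Fin 3 → MvPolynomial (Fin 3) ℂ :=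
  ![(X 1) ^ 2 - X 2 * k2X4 b,
    X 1 * X 2 - k2X4 b * k3X4 b,
    (X 2) ^ 2 - X 1 * k3X4 b]

lemma li_of_minor {u v : Fin 3 → ℂ} {j k : Fin 3}
    (h : u j * v k - u k * v j ≠ 0) : LinearIndependent ℂ ![u, v] := by
  rw [linearIndependent_fin2]
  constructor
  · rintro rfl; simp at h
  · rintro a hav
    apply h
    simp only [Matrix.cons_val_one, Matrix.head_cons, Matrix.cons_val_zero] at hav
    have hj : u j = a * v j := by rw [← hav]; simp
    have hk : u k = a * v k := by rw [← hav]; simp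
    rw [hj, hk]; ring

lemma rank_eq_two_aux (M : Matrix (Fin 3) (Fin 3) ℂ) (hdet : M.det = 0)
    (i i' : Fin 3) (h : LinearIndependent ℂ ![M i, M i']) : M.rank = 2 := by
  refine le_antisymm ?_ ?_
  · obtain ⟨v, hv, hMv⟩ := (Matrix.exists_mulVec_eq_zero_iff).mpr hdet
    have hker : v ∈ LinearMap.ker M.mulVecLin := by
      simpa [Matrix.mulVecLin_apply] using hMv
    have h1 : 1 ≤ Module.finrank ℂ (LinearMap.ker M.mulVecLin) := by
      rw [Nat.one_le_iff_ne_zero]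
      intro h0
      rw [Submodule.finrank_eq_zero] at h0
      exact hv (by simpa [h0] using hker)
    have h3 := LinearMap.finrank_range_add_finrank_ker M.mulVecLin
    simp only [Module.finrank_fintype_fun_eq_card, Fintype.card_fin] at h3
    rw [Matrix.rank]
    omega
  · rw [Matrix.rank_eq_finrank_span_row]
    have hsub : Submodule.span ℂ (Set.range ![M i, M i']) ≤
        Submodule.span ℂ (Set.range M) := by
      apply Submodule.span_mono
      rintro x ⟨w, rfl⟩
      fin_cases w <;> simp <;> exact ⟨_, rfl⟩
    have hcard := finrank_span_eq_card h
    simp only [Fintype.card_fin] at hcard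
    calc 2 = Module.finrank ℂ (Submodule.span ℂ (Set.range ![M i, M i'])) := hcard.symm
      _ ≤ _ := Submodule.finrank_mono hsub

/-- For pairwise distinct `b₁, …, b₅`, at every common zero `(x, y₇, y₈) ∈ ℂ³` of
`f₁₄, f₁₅, f₁₆`, the Jacobian matrix `𝒰₄` of `(f₁₄, f₁₅, f₁₆)` with respect to
`(x, y₇, y₈)` has rank `2`. -/
theorem rank_U4 (b : Fin 5 → ℂ) (hb : Function.Injective b) (p : Fin 3 → ℂ)
    (hp : ∀ i : Fin 3, MvPolynomial.eval p (fX4 b i) = 0) :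
    (Matrix.of fun i j : Fin 3 =>
        MvPolynomial.eval p (MvPolynomial.pderiv j (fX4 b i))).rank = 2 := by
  set x : ℂ := p 0 with hxd
  set a : ℂ := p 1 with had
  set c : ℂ := p 2 with hcd
  set K2 : ℂ := (x - b 3) * (x - b 4) with hK2d
  set K3 : ℂ := (x - b 0) * (x - b 1) * (x - b 2) with hK3d
  set D2 : ℂ := (x - b 3) + (x - b 4) with hD2d
  set D3 : ℂ := (x - b 0) * (x - b 1) + (x - b 0) * (x - b 2) + (x - b 1) * (x - b 2)
    with hD3d
  -- the evaluated defining equations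
  have h1 : a ^ 2 - c * K2 = 0 := by
    have h := hp 0
    simp only [fX4, k2X4, k3X4, Matrix.cons_val_zero, map_sub, map_mul, map_pow,
      eval_X, eval_C] at h
    rw [hK2d, ← hxd, ← had, ← hcd] at *
    linear_combination h
  have h2 : a * c - K2 * K3 = 0 := by
    have h := hp 1
    simp only [fX4, k2X4, k3X4, Matrix.cons_val_one, Matrix.head_cons, Matrix.cons_val_zero, map_sub, map_mul,
      map_pow, eval_X, eval_C] at h
    rw [hK2d, hK3d, ← hxd, ← had, ← hcd] at *
    linear_combination h
  have h3 : c ^ 2 - a * K3 = 0 := by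
    have h := hp 2
    simp only [fX4, k2X4, k3X4, Matrix.cons_val_two, Matrix.tail_cons, Matrix.head_cons,
      map_sub, map_mul, map_pow, eval_X, eval_C] at h
    rw [hK3d, ← hxd, ← had, ← hcd] at *
    linear_combination h
  -- the Jacobian matrix, explicitly
  have hM : (Matrix.of fun i j : Fin 3 =>
        MvPolynomial.eval p (MvPolynomial.pderiv j (fX4 b i))) =
      !![-c * D2, 2 * a, -K2;
         -(D2 * K3 + K2 * D3), c, a;
         -a * D3, -K3, 2 * c] := by
    rw [hD2d, hD3d, hK2d, hK3d, hxd, had, hcd]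
    ext i j
    fin_cases i <;> fin_cases j <;>
      simp [fX4, k2X4, k3X4, pderiv_mul, pderiv_pow, pderiv_X_self, pderiv_X_of_ne,
        Matrix.of_apply] <;> (try ring_nf) <;> (try simp) <;> (try ring)
  rw [hM]
  clear_value x a c K2 K3 D2 D3
  have hdet : (!![-c * D2, 2 * a, -K2;
         -(D2 * K3 + K2 * D3), c, a;
         -a * D3, -K3, 2 * c] : Matrix (Fin 3) (Fin 3) ℂ).det = 0 := by
    rw [Matrix.det_fin_three]
    simp only [Matrix.of_apply, Matrix.cons_val', Matrix.cons_val_zero, Matrix.cons_val_one,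
      Matrix.head_cons, Matrix.empty_val', Matrix.cons_val_fin_one, Matrix.head_fin_const,
      Matrix.cons_val_two, Matrix.tail_cons]
    linear_combination (-2 * a * D3) * h1 + (K2 * D3 + D2 * K3) * h2 + (-2 * c * D2) * h3
  have hbne : ∀ i j : Fin 5, i ≠ j → b i - b j ≠ 0 := fun i j hij =>
    sub_ne_zero.mpr (fun hc => hij (hb hc))
  by_cases ha : a = 0
  · -- then c = 0 and K2 * K3 = 0
    have hc : c = 0 := by
      have hc2 : c ^ 2 = 0 := by linear_combination h3 + K3 * ha
      exact (pow_eq_zero_iff (by norm_num : 2 ≠ 0)).mp hc2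
    have hKK : K2 * K3 = 0 := by linear_combination (-1 : ℂ) * h2 + a * hc
    rcases mul_eq_zero.mp hKK with hK2 | hK3
    · -- K2 = 0 : x is b 3 or b 4 ; K3 ≠ 0 and D2 ≠ 0
      have hK2' : (x - b 3) * (x - b 4) = 0 := by rw [← hK2d]; exact hK2
      have hx34 : x = b 3 ∨ x = b 4 := by
        rcases mul_eq_zero.mp hK2' with h | h
        · exact Or.inl (sub_eq_zero.mp h)
        · exact Or.inr (sub_eq_zero.mp h)
      have hK3ne : K3 ≠ 0 := by
        rcases hx34 with hx | hx <;> rw [hK3d, hx] <;>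
          exact mul_ne_zero (mul_ne_zero (hbne _ _ (by decide)) (hbne _ _ (by decide)))
            (hbne _ _ (by decide))
      have hD2ne : D2 ≠ 0 := by
        rcases hx34 with hx | hx
        · have e : D2 = b 3 - b 4 := by rw [hD2d, hx]; ring
          rw [e]; exact hbne _ _ (by decide)
        · have e : D2 = b 4 - b 3 := by rw [hD2d, hx]; ring
          rw [e]; exact hbne _ _ (by decide)
      apply rank_eq_two_aux _ hdet 1 2
      apply li_of_minor (j := 0) (k := 1)
      show -(D2 * K3 + K2 * D3) * (-K3) - c * (-a * D3) ≠ 0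
      have he : -(D2 * K3 + K2 * D3) * (-K3) - c * (-a * D3) = D2 * K3 ^ 2 := by
        linear_combination (D3 * K3) * hK2 + (D3 * c) * ha
      rw [he]
      exact mul_ne_zero hD2ne (pow_ne_zero 2 hK3ne)
    · -- K3 = 0 : x is b 0, b 1 or b 2 ; K2 ≠ 0 and D3 ≠ 0
      have hK3' : (x - b 0) * (x - b 1) * (x - b 2) = 0 := by rw [← hK3d]; exact hK3
      have hx012 : x = b 0 ∨ x = b 1 ∨ x = b 2 := by
        rcases mul_eq_zero.mp hK3' with h | h
        · rcases mul_eq_zero.mp h with h | h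
          · exact Or.inl (sub_eq_zero.mp h)
          · exact Or.inr (Or.inl (sub_eq_zero.mp h))
        · exact Or.inr (Or.inr (sub_eq_zero.mp h))
      have hK2ne : K2 ≠ 0 := by
        rcases hx012 with hx | hx | hx <;> rw [hK2d, hx] <;>
          exact mul_ne_zero (hbne _ _ (by decide)) (hbne _ _ (by decide))
      have hD3ne : D3 ≠ 0 := by
        rcases hx012 with hx | hx | hx
        · have e : D3 = (b 0 - b 1) * (b 0 - b 2) := by rw [hD3d, hx]; ring
          rw [e]; exact mul_ne_zero (hbne _ _ (by decide)) (hbne _ _ (by decide))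
        · have e : D3 = (b 1 - b 0) * (b 1 - b 2) := by rw [hD3d, hx]; ring
          rw [e]; exact mul_ne_zero (hbne _ _ (by decide)) (hbne _ _ (by decide))
        · have e : D3 = (b 2 - b 0) * (b 2 - b 1) := by rw [hD3d, hx]; ring
          rw [e]; exact mul_ne_zero (hbne _ _ (by decide)) (hbne _ _ (by decide))
      apply rank_eq_two_aux _ hdet 0 1
      apply li_of_minor (j := 0) (k := 2)
      show -c * D2 * a - -K2 * -(D2 * K3 + K2 * D3) ≠ 0
      have he : -c * D2 * a - -K2 * -(D2 * K3 + K2 * D3) = -(K2 ^ 2 * D3) := by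
        linear_combination (-K2 * D2) * hK3 + (-D2 * c) * ha
      rw [he]
      exact neg_ne_zero.mpr (mul_ne_zero (pow_ne_zero 2 hK2ne) hD3ne)
  · -- a ≠ 0 (and then c ≠ 0 is not even needed)
    apply rank_eq_two_aux _ hdet 0 1
    apply li_of_minor (j := 1) (k := 2)
    show 2 * a * a - -K2 * c ≠ 0
    have he : 2 * a * a - -K2 * c = 3 * a ^ 2 := by
      linear_combination (-1 : ℂ) * h1
    rw [he]
    exact mul_ne_zero three_ne_zero (pow_ne_zero 2 ha)
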